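/- arXiv:1603.00161 — 4 statements merged into one kernel-verified Lean document; each statement's English description precedes it below -/
import Mathlib

section
/- Let q be a power of an odd prime, let d ∈ 𝔽_q[T] be square-free and non-constant, and let p ∈ 𝔽_q[T] be an irreducible polynomial not dividing d. Then the ideal (p) of A = 𝔽_q[T] is generated by an element of the form x² − d·y² with x, y ∈ A if and only if the ideal p·B_K of B_K factors as a product 𝔭·𝔭' of two distinct prime ideals of B_K, with 𝔭 a principal ideal. -/
open Polynomial

section Aux

variable {Fq : Type} [Field Fq]

lemma aux_not_square {d : Polynomial Fq} (hsf : Squarefree d) (hnc : 0 < d.natDegree) :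
    ¬ ∃ c : RatFunc Fq, c ^ 2 = algebraMap (Polynomial Fq) (RatFunc Fq) d := by
  rintro ⟨c, hc⟩
  have hint : IsIntegral (Polynomial Fq) c := by
    refine ⟨X ^ 2 - C d, monic_X_pow_sub_C d (by norm_num), ?_⟩
    simp [hc]
  obtain ⟨e, he⟩ := IsIntegrallyClosed.isIntegral_iff.mp hint
  have he2 : e ^ 2 = d := by
    have : algebraMap (Polynomial Fq) (RatFunc Fq) (e ^ 2) =
        algebraMap (Polynomial Fq) (RatFunc Fq) d := by
      rw [map_pow, he, hc]
    exact IsFractionRing.injective (Polynomial Fq) (RatFunc Fq) this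
  have hu : IsUnit e := hsf e (by rw [← he2]; ring_nf; exact dvd_rfl)
  have : d.natDegree = 0 := by
    rw [← he2, natDegree_pow, Polynomial.natDegree_eq_zero_of_isUnit hu]
  omega

lemma aux_denom {d : Polynomial Fq} (hsf : Squarefree d) {b : RatFunc Fq} {w : Polynomial Fq}
    (h : algebraMap (Polynomial Fq) (RatFunc Fq) w =
      algebraMap (Polynomial Fq) (RatFunc Fq) d * b ^ 2) :
    ∃ y : Polynomial Fq, b = algebraMap (Polynomial Fq) (RatFunc Fq) y := by
  have hd0 : (algebraMap (Polynomial Fq) (RatFunc Fq)) b.denom ≠ 0 := by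
    simpa using (RatFunc.denom_ne_zero b)
  have hbd : b * algebraMap (Polynomial Fq) (RatFunc Fq) b.denom =
      algebraMap (Polynomial Fq) (RatFunc Fq) b.num := by
    have h2 := congrArg (· * algebraMap (Polynomial Fq) (RatFunc Fq) b.denom)
      (RatFunc.num_div_denom b)
    simp only [div_mul_cancel₀ _ hd0] at h2
    exact h2.symm
  have key : w * b.denom ^ 2 = d * b.num ^ 2 := by
    apply IsFractionRing.injective (Polynomial Fq) (RatFunc Fq)
    rw [map_mul, map_mul, map_pow, map_pow, h, ← hbd]
    ring
  have hdvd : b.denom ^ 2 ∣ d := by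
    have cop : IsCoprime (b.denom ^ 2) (b.num ^ 2) :=
      (RatFunc.isCoprime_num_denom b).symm.pow
    exact cop.dvd_of_dvd_mul_right ⟨w, by linear_combination key.symm⟩
  have hu : IsUnit b.denom := hsf b.denom (by rwa [← sq])
  obtain ⟨u, hu⟩ := hu
  refine ⟨b.num * ↑u⁻¹, ?_⟩
  apply mul_right_cancel₀ hd0
  rw [hbd, ← map_mul]
  congr 1
  rw [mul_assoc, ← hu, ← Units.val_mul, inv_mul_cancel, Units.val_one, mul_one]


variable {K : Type} [Field K] [Algebra (RatFunc Fq) K] [Algebra (Polynomial Fq) K]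
  [IsScalarTower (Polynomial Fq) (RatFunc Fq) K]

lemma aux_indep {d : Polynomial Fq} (hsf : Squarefree d) (hnc : 0 < d.natDegree)
    {sqd : K} (hsqd : sqd ^ 2 = algebraMap (Polynomial Fq) K d)
    {a b : RatFunc Fq}
    (h : algebraMap (RatFunc Fq) K a + algebraMap (RatFunc Fq) K b * sqd = 0) :
    a = 0 ∧ b = 0 := by
  have hinj : Function.Injective (algebraMap (RatFunc Fq) K) :=
    (algebraMap (RatFunc Fq) K).injective
  by_cases hb : b = 0
  · subst hb
    simp only [map_zero, zero_mul, add_zero] at h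
    exact ⟨hinj (by simpa using h), rfl⟩
  · exfalso
    have hbK : algebraMap (RatFunc Fq) K b ≠ 0 := fun hc => hb (hinj (by simpa using hc))
    have hs : sqd = algebraMap (RatFunc Fq) K (-(a / b)) := by
      have h2 : algebraMap (RatFunc Fq) K a / algebraMap (RatFunc Fq) K b = -sqd := by
        rw [div_eq_iff hbK]
        linear_combination h
      rw [map_neg, map_div₀, h2, neg_neg]
    apply aux_not_square hsf hnc (d := d)
    refine ⟨-(a / b), hinj ?_⟩
    rw [map_pow, ← hs, hsqd, IsScalarTower.algebraMap_apply (Polynomial Fq) (RatFunc Fq) K]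

lemma aux_uniq {d : Polynomial Fq} (hsf : Squarefree d) (hnc : 0 < d.natDegree)
    {sqd : K} (hsqd : sqd ^ 2 = algebraMap (Polynomial Fq) K d)
    {a b a' b' : Polynomial Fq}
    (h : algebraMap (Polynomial Fq) K a + algebraMap (Polynomial Fq) K b * sqd =
      algebraMap (Polynomial Fq) K a' + algebraMap (Polynomial Fq) K b' * sqd) :
    a = a' ∧ b = b' := by
  have hinj : Function.Injective (algebraMap (Polynomial Fq) (RatFunc Fq)) :=
    IsFractionRing.injective (Polynomial Fq) (RatFunc Fq)
  have key : algebraMap (RatFunc Fq) K (algebraMap (Polynomial Fq) (RatFunc Fq) (a - a'))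
      + algebraMap (RatFunc Fq) K (algebraMap (Polynomial Fq) (RatFunc Fq) (b - b')) * sqd
      = 0 := by
    rw [← IsScalarTower.algebraMap_apply, ← IsScalarTower.algebraMap_apply, map_sub, map_sub]
    linear_combination h
  obtain ⟨h1, h2⟩ := aux_indep hsf hnc hsqd key
  constructor
  · exact sub_eq_zero.mp (hinj (h1.trans (map_zero _).symm))
  · exact sub_eq_zero.mp (hinj (h2.trans (map_zero _).symm))


lemma aux_coords {d : Polynomial Fq} (hsf : Squarefree d) (hnc : 0 < d.natDegree)
    (h2 : (2 : Fq) ≠ 0)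
    {sqd : K} (hsqd : sqd ^ 2 = algebraMap (Polynomial Fq) K d)
    (hgen : ∀ z : K, ∃ a b : RatFunc Fq,
      z = algebraMap (RatFunc Fq) K a + algebraMap (RatFunc Fq) K b * sqd)
    {z : K} (hz : IsIntegral (Polynomial Fq) z) :
    ∃ x y : Polynomial Fq,
      z = algebraMap (Polynomial Fq) K x + algebraMap (Polynomial Fq) K y * sqd := by
  obtain ⟨a, b, hab⟩ := hgen z
  have hinjA : Function.Injective (algebraMap (Polynomial Fq) (RatFunc Fq)) :=
    IsFractionRing.injective (Polynomial Fq) (RatFunc Fq)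
  by_cases hb : b = 0
  · have hza : z = algebraMap (RatFunc Fq) K a := by rw [hab, hb]; simp
    have hia : IsIntegral (Polynomial Fq) a := by
      rw [← isIntegral_algebraMap_iff (algebraMap (RatFunc Fq) K).injective, ← hza]
      exact hz
    obtain ⟨x, hx⟩ := IsIntegrallyClosed.isIntegral_iff.mp hia
    refine ⟨x, 0, ?_⟩
    rw [hza, ← hx, map_zero, zero_mul, add_zero,
      IsScalarTower.algebraMap_apply (Polynomial Fq) (RatFunc Fq) K]
  · set d' := algebraMap (Polynomial Fq) (RatFunc Fq) d with hd'
    set P : Polynomial (RatFunc Fq) :=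
      X ^ 2 - C (2 * a) * X + C (a ^ 2 - d' * b ^ 2) with hP
    have htow : algebraMap (RatFunc Fq) K d' = algebraMap (Polynomial Fq) K d :=
      (IsScalarTower.algebraMap_apply (Polynomial Fq) (RatFunc Fq) K d).symm
    have hPdeg : P.natDegree = 2 := by rw [hP]; compute_degree!
    have hmonic : P.Monic := by
      rw [hP]; monicity!
    have hroot : Polynomial.aeval z P = 0 := by
      rw [hP]
      simp only [map_add, map_sub, map_pow, map_mul, aeval_X, aeval_C]
      have e3 : algebraMap (RatFunc Fq) K 2 = 2 := map_ofNat _ 2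
      rw [e3, htow, hab]
      linear_combination (algebraMap (RatFunc Fq) K b) ^ 2 * hsqd
    have hzF : IsIntegral (RatFunc Fq) z := hz.tower_top
    have hdvd : minpoly (RatFunc Fq) z ∣ P := minpoly.dvd _ z hroot
    have hdeg_le : (minpoly (RatFunc Fq) z).natDegree ≤ 2 :=
      hPdeg ▸ Polynomial.natDegree_le_of_dvd hdvd hmonic.ne_zero
    have hdeg_pos : 0 < (minpoly (RatFunc Fq) z).natDegree := minpoly.natDegree_pos hzF
    have hmono : (minpoly (RatFunc Fq) z).Monic := minpoly.monic hzF
    rcases (by omega : (minpoly (RatFunc Fq) z).natDegree = 1 ∨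
        (minpoly (RatFunc Fq) z).natDegree = 2) with h1 | hμ2
    · exfalso
      have := minpoly.aeval (RatFunc Fq) z
      rw [hmono.eq_X_add_C h1] at this
      simp only [map_add, aeval_X, aeval_C] at this
      have hzero : algebraMap (RatFunc Fq) K (a + (minpoly (RatFunc Fq) z).coeff 0)
          + algebraMap (RatFunc Fq) K b * sqd = 0 := by
        rw [map_add]
        linear_combination this - hab
      exact hb (aux_indep hsf hnc hsqd hzero).2
    · have heqP : minpoly (RatFunc Fq) z = P := by
        obtain ⟨c, hc⟩ := hdvd
        have hc0 : c ≠ 0 := by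
          intro h0; rw [h0, mul_zero] at hc; exact hmonic.ne_zero hc
        have hμ0 : minpoly (RatFunc Fq) z ≠ 0 := hmono.ne_zero
        have hdegc : c.natDegree = 0 := by
          have := Polynomial.natDegree_mul hμ0 hc0
          rw [← hc, hPdeg, hμ2] at this
          omega
        have hlc : c.leadingCoeff = 1 := by
          have h3 : P.leadingCoeff = (minpoly (RatFunc Fq) z).leadingCoeff * c.leadingCoeff := by
            rw [hc, Polynomial.leadingCoeff_mul]
          rw [hmonic.leadingCoeff, hmono.leadingCoeff, one_mul] at h3
          exact h3.symm
        have : c = 1 := by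
          rw [Polynomial.eq_C_of_natDegree_eq_zero hdegc]
          rw [Polynomial.eq_C_of_natDegree_eq_zero hdegc] at hlc
          rw [Polynomial.leadingCoeff_C] at hlc
          rw [hlc, map_one]
        rw [hc, this, mul_one]
      have hmap : P = Polynomial.map (algebraMap (Polynomial Fq) (RatFunc Fq))
          (minpoly (Polynomial Fq) z) := by
        rw [← heqP]
        exact minpoly.isIntegrallyClosed_eq_field_fractions (RatFunc Fq) K hz
      set μ := minpoly (Polynomial Fq) z with hμdef
      have hc1 : P.coeff 1 = -(2 * a) := by
        rw [hP]
        rw [Polynomial.coeff_add, Polynomial.coeff_sub, Polynomial.coeff_X_pow,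
          Polynomial.coeff_C_mul, Polynomial.coeff_X_one, Polynomial.coeff_C]
        norm_num
      have hc0P : P.coeff 0 = a ^ 2 - d' * b ^ 2 := by
        rw [hP]
        rw [Polynomial.coeff_add, Polynomial.coeff_sub, Polynomial.coeff_X_pow,
          Polynomial.coeff_C_mul, Polynomial.coeff_X_zero, Polynomial.coeff_C]
        norm_num
      have hm1 : algebraMap (Polynomial Fq) (RatFunc Fq) (μ.coeff 1) = -(2 * a) := by
        rw [← hc1, hmap, Polynomial.coeff_map]
      have hm0 : algebraMap (Polynomial Fq) (RatFunc Fq) (μ.coeff 0) = a ^ 2 - d' * b ^ 2 := by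
        rw [← hc0P, hmap, Polynomial.coeff_map]
      set e : Polynomial Fq := Polynomial.C (2 : Fq)⁻¹ * (-(μ.coeff 1)) with hedef
      have h21 : algebraMap (Polynomial Fq) (RatFunc Fq) (Polynomial.C (2 : Fq)⁻¹) *
          (2 : RatFunc Fq) = 1 := by
        rw [show (2 : RatFunc Fq) = algebraMap (Polynomial Fq) (RatFunc Fq) (2 : Polynomial Fq)
          from (map_ofNat _ 2).symm,
          show (2 : Polynomial Fq) = Polynomial.C (2 : Fq) from (map_ofNat Polynomial.C 2).symm,
          ← map_mul, ← Polynomial.C_mul, inv_mul_cancel₀ h2, Polynomial.C_1, map_one]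
      have ha : algebraMap (Polynomial Fq) (RatFunc Fq) e = a := by
        rw [hedef, map_mul, map_neg, hm1, neg_neg]
        calc algebraMap (Polynomial Fq) (RatFunc Fq) (Polynomial.C (2 : Fq)⁻¹) * (2 * a)
            = (algebraMap (Polynomial Fq) (RatFunc Fq) (Polynomial.C (2 : Fq)⁻¹) * 2) * a := by
              ring
          _ = a := by rw [h21, one_mul]
      have hw : algebraMap (Polynomial Fq) (RatFunc Fq) (e ^ 2 - μ.coeff 0) = d' * b ^ 2 := by
        rw [map_sub, map_pow, ha, hm0]
        ring
      obtain ⟨y0, hy⟩ := aux_denom hsf hw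
      refine ⟨e, y0, ?_⟩
      rw [hab, ← ha, hy, ← IsScalarTower.algebraMap_apply, ← IsScalarTower.algebraMap_apply]
end Aux

set_option maxHeartbeats 1600000 in
set_option synthInstance.maxHeartbeats 400000 in
/-- Let `q` be a power of an odd prime, let `d ∈ 𝔽_q[T]` be square-free and
non-constant, and let `p ∈ 𝔽_q[T]` be an irreducible polynomial not dividing
`d`.  Then the ideal `(p)` of `A = 𝔽_q[T]` is generated by an element of the
form `x² - d·y²` with `x, y ∈ A` if and only if the ideal `p·B_K` of `B_K`
(the integral closure of `A` in `K = 𝔽_q(T)(√d)`) factors as a product `𝔭·𝔭'`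
of two distinct prime ideals of `B_K`, with `𝔭` a principal ideal. -/
theorem stmt_2 (q : ℕ) (Fq : Type) [Field Fq] [Fintype Fq]
    (hq : Fintype.card Fq = q) (hodd : Odd q)
    (d : Polynomial Fq) (hsf : Squarefree d) (hnc : 0 < d.natDegree)
    (K : Type) [Field K] [Algebra (RatFunc Fq) K]
    [Algebra (Polynomial Fq) K] [IsScalarTower (Polynomial Fq) (RatFunc Fq) K]
    (sqd : K) (hsqd : sqd ^ 2 = algebraMap (Polynomial Fq) K d)
    (hgen : ∀ z : K, ∃ a b : RatFunc Fq,
      z = algebraMap (RatFunc Fq) K a + algebraMap (RatFunc Fq) K b * sqd)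
    (p : Polynomial Fq) (hirr : Irreducible p) (hpd : ¬ p ∣ d) :
    (∃ x y : Polynomial Fq, Ideal.span {p} = Ideal.span {x ^ 2 - d * y ^ 2}) ↔
      (∃ 𝔭 𝔭' : Ideal ↥(integralClosure (Polynomial Fq) K),
        𝔭.IsPrime ∧ 𝔭'.IsPrime ∧ 𝔭 ≠ 𝔭' ∧
        Ideal.span {algebraMap (Polynomial Fq) ↥(integralClosure (Polynomial Fq) K) p} =
          𝔭 * 𝔭' ∧
        Submodule.IsPrincipal 𝔭) := by
  -- abbreviations
  have h2 : (2 : Fq) ≠ 0 := by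
    intro h20
    haveI := ringChar.charP Fq
    have hdvd : ringChar Fq ∣ 2 := by
      rw [← CharP.cast_eq_zero_iff Fq (ringChar Fq) 2]
      exact_mod_cast h20
    obtain ⟨n, hprime, hcard⟩ := FiniteField.card Fq (ringChar Fq)
    have hch2 : ringChar Fq = 2 :=
      ((Nat.prime_dvd_prime_iff_eq hprime Nat.prime_two).mp hdvd)
    rw [hq, hch2] at hcard
    rw [hcard] at hodd
    exact Nat.not_odd_iff_even.mpr (Nat.even_pow.mpr ⟨even_iff_two_dvd.mpr dvd_rfl, n.2.ne'⟩) hodd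
  have hinjA : Function.Injective (algebraMap (Polynomial Fq) (RatFunc Fq)) :=
    IsFractionRing.injective (Polynomial Fq) (RatFunc Fq)
  have hinjK : Function.Injective (algebraMap (Polynomial Fq) K) := by
    rw [IsScalarTower.algebraMap_eq (Polynomial Fq) (RatFunc Fq) K]
    exact (algebraMap (RatFunc Fq) K).injective.comp hinjA
  have hpprime : Prime p := hirr.prime
  have hpmax : (Ideal.span {p}).IsMaximal :=
    PrincipalIdealRing.isMaximal_of_irreducible hirr
  have hsqdmem : sqd ∈ integralClosure (Polynomial Fq) K := by
    refine ⟨X ^ 2 - C d, monic_X_pow_sub_C d (by norm_num), ?_⟩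
    simp [hsqd]
  set B := ↥(integralClosure (Polynomial Fq) K) with hBdef
  set sB : B := ⟨sqd, hsqdmem⟩ with hsBdef
  set iB := algebraMap (Polynomial Fq) B with hiBdef
  have hcoe : ∀ r : Polynomial Fq, ((iB r : B) : K) = algebraMap (Polynomial Fq) K r :=
    fun r => rfl
  have hs2 : sB * sB = iB d := by
    apply Subtype.ext
    rw [Subalgebra.coe_mul, hcoe, ← hsqd]
    ring
  have hmulB : ∀ g h g' h' : Polynomial Fq,
      (iB g + iB h * sB) * (iB g' + iB h' * sB) =
        iB (g * g' + d * (h * h')) + iB (g * h' + h * g') * sB := by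
    intro g h g' h'
    simp only [map_add, map_mul]
    linear_combination (iB h * iB h') * hs2
  have huniqB : ∀ a b a' b' : Polynomial Fq,
      iB a + iB b * sB = iB a' + iB b' * sB → a = a' ∧ b = b' := by
    intro a b a' b' h
    apply aux_uniq hsf hnc hsqd
    have := Subtype.ext_iff.mp h
    exact this
  have hcoordsB : ∀ z : B, ∃ x y : Polynomial Fq, z = iB x + iB y * sB := by
    intro z
    obtain ⟨x, y, hxy⟩ := aux_coords hsf hnc h2 hsqd hgen z.2
    exact ⟨x, y, Subtype.ext hxy⟩
  have hNunit : ∀ g h : Polynomial Fq, IsUnit (iB g + iB h * sB) →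
      IsUnit (g ^ 2 - d * h ^ 2) := by
    intro g h hu
    obtain ⟨γ', hγ'⟩ := isUnit_iff_exists_inv.mp hu
    obtain ⟨g', h', rfl⟩ := hcoordsB γ'
    rw [hmulB] at hγ'
    have hone : iB (g * g' + d * (h * h')) + iB (g * h' + h * g') * sB =
        iB 1 + iB 0 * sB := by rw [hγ']; simp
    obtain ⟨e1, e2⟩ := huniqB _ _ _ _ hone
    exact IsUnit.of_mul_eq_one (g' ^ 2 - d * h' ^ 2)
      (by linear_combination (g * g' + d * (h * h') + 1) * e1 - d * (g * h' + h * g') * e2)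
  -- key lemma: if x^2 - d y^2 is associated to p then the ideal generated by
  -- x + y √d is maximal with comap equal to (p)
  have main_prime : ∀ x y : Polynomial Fq, Associated p (x ^ 2 - d * y ^ 2) →
      (Ideal.span {iB x + iB y * sB}).IsMaximal ∧
      Ideal.comap iB (Ideal.span {iB x + iB y * sB}) = Ideal.span {p} ∧
      ¬ p ∣ x ∧ ¬ p ∣ y := by
    intro x y hass
    obtain ⟨u, hu⟩ := hass
    have hp0 : p ≠ 0 := hirr.ne_zero
    have hpsq : ¬ ((p ∣ x) ∧ (p ∣ y)) := by
      rintro ⟨⟨t, rfl⟩, ⟨s, rfl⟩⟩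
      have hdvd2 : p * p ∣ p * ↑u := ⟨t ^ 2 - d * s ^ 2, by linear_combination hu⟩
      have : p ∣ ↑u := (mul_dvd_mul_iff_left hp0).mp hdvd2
      exact hirr.not_isUnit (isUnit_of_dvd_unit this u.isUnit)
    have hpx : ¬ p ∣ x := by
      intro hdx
      have h' : d * y ^ 2 = x ^ 2 - p * ↑u := by linear_combination hu
      have hdy2 : p ∣ d * y ^ 2 := by
        rw [h']; exact dvd_sub (dvd_pow hdx two_ne_zero) (dvd_mul_right p ↑u)
      have hy2 : p ∣ y ^ 2 := (hpprime.2.2 d (y ^ 2) hdy2).resolve_left hpd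
      exact hpsq ⟨hdx, hpprime.dvd_of_dvd_pow hy2⟩
    have hpy : ¬ p ∣ y := by
      intro hdy
      have h' : x ^ 2 = p * ↑u + d * y ^ 2 := by linear_combination -hu
      have hx2 : p ∣ x ^ 2 := by
        rw [h']
        exact dvd_add (dvd_mul_right p ↑u) ((dvd_pow hdy two_ne_zero).mul_left d)
      exact hpsq ⟨hpprime.dvd_of_dvd_pow hx2, hdy⟩
    set α : B := iB x + iB y * sB with hαdef
    set 𝔭 : Ideal B := Ideal.span {α} with h𝔭def
    have hαβ : α * (iB x + iB (-y) * sB) = iB (p * ↑u) := by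
      rw [hαdef, hmulB]
      have e0 : x * (-y) + y * x = 0 := by ring
      have e1 : x * x + d * (y * -y) = p * ↑u := by linear_combination -hu
      rw [e0, e1, map_zero, zero_mul, add_zero]
    have hppmem : iB p ∈ 𝔭 := by
      rw [h𝔭def, Ideal.mem_span_singleton]
      refine ⟨(iB x + iB (-y) * sB) * iB ↑u⁻¹, ?_⟩
      rw [← mul_assoc, hαβ, ← map_mul]
      congr 1
      rw [mul_assoc, Units.mul_inv, mul_one]
    have hnotunit : ¬ IsUnit α := by
      intro hun
      have := hNunit x y hun
      rw [← hu] at this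
      exact hirr.not_isUnit (isUnit_of_mul_isUnit_left this)
    set φ : Polynomial Fq →+* (B ⧸ 𝔭) := (Ideal.Quotient.mk 𝔭).comp iB with hφdef
    have hker1 : RingHom.ker φ = Ideal.comap iB 𝔭 := by
      conv_rhs => rw [← Ideal.mk_ker (I := 𝔭)]
      rw [RingHom.comap_ker]
    have hkerne : RingHom.ker φ ≠ ⊤ := by
      intro htop
      have h1 : (1 : Polynomial Fq) ∈ RingHom.ker φ := htop ▸ Submodule.mem_top
      have h2' : (1 : B) ∈ 𝔭 := by
        have := h1
        rw [RingHom.mem_ker, hφdef, RingHom.comp_apply, map_one,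
          Ideal.Quotient.eq_zero_iff_mem] at this
        exact this
      have : 𝔭 = ⊤ := Ideal.eq_top_iff_one 𝔭 |>.mpr h2'
      rw [h𝔭def, Ideal.span_singleton_eq_top] at this
      exact hnotunit this
    have hkerle : Ideal.span {p} ≤ RingHom.ker φ := by
      rw [Ideal.span_le]
      intro r hr
      rw [Set.mem_singleton_iff] at hr
      subst hr
      rw [SetLike.mem_coe, RingHom.mem_ker, hφdef, RingHom.comp_apply,
        Ideal.Quotient.eq_zero_iff_mem]
      exact hppmem
    have hker : RingHom.ker φ = Ideal.span {p} := (hpmax.eq_of_le hkerne hkerle).symm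
    have hsurj : Function.Surjective φ := by
      obtain ⟨c, y', hcy⟩ := (hirr.coprime_iff_not_dvd.mpr hpy)
      have key : Ideal.Quotient.mk 𝔭 sB = Ideal.Quotient.mk 𝔭 (iB (-(y' * x))) := by
        rw [Ideal.Quotient.eq]
        have hmem1 : iB y' * α ∈ 𝔭 :=
          Ideal.mul_mem_left _ _ (Ideal.mem_span_singleton_self α)
        have hmem2 : iB (c * p) * sB ∈ 𝔭 := by
          rw [map_mul]
          have := Ideal.mul_mem_left 𝔭 (iB c * sB) hppmem
          convert this using 1
          ring
        have E1 : iB y' * α = iB (y' * x) + iB (y' * y) * sB := by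
          rw [hαdef, map_mul, map_mul]
          ring
        have E2 : iB (c * p) + iB (y' * y) = 1 := by
          rw [← map_add, ← map_one iB]
          exact congrArg iB (by linear_combination hcy)
        have heq : sB - iB (-(y' * x)) = iB y' * α + iB (c * p) * sB := by
          rw [map_neg, sub_neg_eq_add]
          linear_combination - E1 - sB * E2
        rw [heq]
        exact Ideal.add_mem _ hmem1 hmem2
      intro zq
      obtain ⟨z, rfl⟩ := Ideal.Quotient.mk_surjective zq
      obtain ⟨a, b, rfl⟩ := hcoordsB z
      refine ⟨a + b * (-(y' * x)), ?_⟩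
      show Ideal.Quotient.mk 𝔭 (iB (a + b * (-(y' * x)))) =
        Ideal.Quotient.mk 𝔭 (iB a + iB b * sB)
      rw [map_add iB, map_mul iB, map_add, map_mul, map_add, map_mul, key]
    have hfieldA : IsField (Polynomial Fq ⧸ Ideal.span {p}) :=
      (Ideal.Quotient.maximal_ideal_iff_isField_quotient _).mp hpmax
    have e := RingHom.quotientKerEquivOfSurjective hsurj
    replace e := (Ideal.quotEquivOfEq hker.symm).trans e
    have hfieldB : IsField (B ⧸ 𝔭) := e.symm.toMulEquiv.isField hfieldA
    exact ⟨Ideal.Quotient.maximal_of_isField _ hfieldB, by rw [← hker1, hker], hpx, hpy⟩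
  have h2A : IsUnit (2 : Polynomial Fq) := by
    rw [show (2 : Polynomial Fq) = C (2 : Fq) from (map_ofNat C 2).symm, Polynomial.isUnit_C]
    exact (isUnit_iff_ne_zero).mpr h2
  constructor
  · rintro ⟨x, y, hspan⟩
    have hass : Associated p (x ^ 2 - d * y ^ 2) :=
      Ideal.span_singleton_eq_span_singleton.mp hspan
    obtain ⟨hmax1, hcom1, hpx, hpy⟩ := main_prime x y hass
    have hass' := hass
    rw [show x ^ 2 - d * y ^ 2 = x ^ 2 - d * (-y) ^ 2 from by ring] at hass'
    obtain ⟨hmax2, hcom2, -, -⟩ := main_prime x (-y) hass'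
    obtain ⟨u, hu⟩ := hass
    have hαβ : (iB x + iB y * sB) * (iB x + iB (-y) * sB) = iB (p * ↑u) := by
      rw [hmulB]
      have e0 : x * (-y) + y * x = 0 := by ring
      have e1 : x * x + d * (y * -y) = p * ↑u := by linear_combination -hu
      rw [e0, e1, map_zero, zero_mul, add_zero]
    refine ⟨Ideal.span {iB x + iB y * sB}, Ideal.span {iB x + iB (-y) * sB},
      hmax1.isPrime, hmax2.isPrime, ?_, ?_, ⟨⟨_, rfl⟩⟩⟩
    · intro heq
      have hmem1 : iB x + iB y * sB ∈ Ideal.span {iB x + iB y * sB} :=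
        Ideal.mem_span_singleton_self _
      have hmem2 : iB x + iB (-y) * sB ∈ Ideal.span {iB x + iB y * sB} := by
        rw [heq]; exact Ideal.mem_span_singleton_self _
      have hsum : (iB x + iB y * sB) + (iB x + iB (-y) * sB) = iB (2 * x) := by
        rw [map_mul, map_ofNat, map_neg]
        ring
      have hmemsum : iB (2 * x) ∈ Ideal.span {iB x + iB y * sB} := by
        rw [← hsum]; exact Ideal.add_mem _ hmem1 hmem2
      have h2x : 2 * x ∈ Ideal.comap iB (Ideal.span {iB x + iB y * sB}) :=
        Ideal.mem_comap.mpr hmemsum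
      rw [hcom1, Ideal.mem_span_singleton] at h2x
      rcases hpprime.2.2 _ _ h2x with hc | hc
      · exact hirr.not_isUnit (isUnit_of_dvd_unit hc h2A)
      · exact hpx hc
    · rw [Ideal.span_singleton_mul_span_singleton, hαβ]
      apply Ideal.span_singleton_eq_span_singleton.mpr
      have : Associated (p * ↑u) p := ⟨u⁻¹, by rw [mul_assoc, Units.mul_inv, mul_one]⟩
      exact (this.map iB).symm
  · rintro ⟨𝔭, 𝔭', hP, hP', hne, hprodEq, hprinc⟩
    haveI : Algebra.IsIntegral (Polynomial Fq) B := ⟨fun z => integralClosure.isIntegral z⟩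
    obtain ⟨α, hα⟩ := hprinc.principal
    rw [Ideal.submodule_span_eq] at hα
    have hp0 : p ≠ 0 := hirr.ne_zero
    have hpmem𝔭 : iB p ∈ 𝔭 := by
      have : iB p ∈ Ideal.span {iB p} := Ideal.mem_span_singleton_self _
      rw [hprodEq] at this
      exact Ideal.mul_le_left this
    have hcomQ : ∀ Q : Ideal B, Q.IsPrime → iB p ∈ Q → Ideal.comap iB Q = Ideal.span {p} := by
      intro Q hQ hmem
      haveI := hQ
      have hprimeQ : (Ideal.comap iB Q).IsPrime := Ideal.IsPrime.comap _
      have hle : Ideal.span {p} ≤ Ideal.comap iB Q := by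
        rw [Ideal.span_le]
        intro r hr
        rw [Set.mem_singleton_iff] at hr
        subst hr
        exact Ideal.mem_comap.mpr hmem
      exact (hpmax.eq_of_le hprimeQ.ne_top hle).symm
    have hcom𝔭 : Ideal.comap iB 𝔭 = Ideal.span {p} := hcomQ 𝔭 hP hpmem𝔭
    haveI := hP
    have hmax𝔭 : 𝔭.IsMaximal := by
      apply Ideal.isMaximal_of_isIntegral_of_isMaximal_comap (R := Polynomial Fq) 𝔭
      rw [show Ideal.comap (algebraMap (Polynomial Fq) B) 𝔭 = Ideal.comap iB 𝔭 from rfl, hcom𝔭]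
      exact hpmax
    obtain ⟨x0, y0, hα0⟩ := hcoordsB α
    have hαmem : α ∈ 𝔭 := by rw [hα]; exact Ideal.mem_span_singleton_self _
    have hαβ : α * (iB x0 + iB (-y0) * sB) = iB (x0 ^ 2 - d * y0 ^ 2) := by
      rw [hα0, hmulB, show x0 * -y0 + y0 * x0 = 0 from by ring,
        show x0 * x0 + d * (y0 * -y0) = x0 ^ 2 - d * y0 ^ 2 from by ring,
        map_zero, zero_mul, add_zero]
    have hNmem : iB (x0 ^ 2 - d * y0 ^ 2) ∈ 𝔭 := by
      rw [← hαβ]; exact Ideal.mul_mem_right _ _ hαmem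
    have hNdvd : p ∣ x0 ^ 2 - d * y0 ^ 2 := by
      have := Ideal.mem_comap.mpr hNmem
      rw [hcom𝔭, Ideal.mem_span_singleton] at this
      exact this
    obtain ⟨m, hm⟩ := hNdvd
    have hαdvd : α ∣ iB p := by
      have := hpmem𝔭
      rw [hα, Ideal.mem_span_singleton] at this
      exact this
    obtain ⟨γ, hγ⟩ := hαdvd
    obtain ⟨g, h, rfl⟩ := hcoordsB γ
    have heq2 : iB (x0 * g + d * (y0 * h)) + iB (x0 * h + y0 * g) * sB =
        iB p + iB 0 * sB := by
      rw [map_zero, zero_mul, add_zero, ← hmulB, ← hα0, ← hγ]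
    obtain ⟨e1, e2⟩ := huniqB _ _ _ _ heq2
    have hbr : (x0 ^ 2 - d * y0 ^ 2) * (g ^ 2 - d * h ^ 2) = p ^ 2 := by
      linear_combination (x0 * g + d * (y0 * h) + p) * e1 - d * (x0 * h + y0 * g) * e2
    have hmw : m * (g ^ 2 - d * h ^ 2) = p := by
      apply mul_left_cancel₀ hp0
      rw [hm] at hbr
      linear_combination hbr
    rcases hirr.isUnit_or_isUnit hmw.symm with hum | huw
    · refine ⟨x0, y0, ?_⟩
      apply Ideal.span_singleton_eq_span_singleton.mpr
      exact ⟨hum.unit, by rw [IsUnit.unit_spec]; exact hm.symm⟩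
    · exfalso
      have hγprod : (iB g + iB h * sB) * (iB g + iB (-h) * sB) = iB (g ^ 2 - d * h ^ 2) := by
        rw [hmulB, show g * -h + h * g = 0 from by ring,
          show g * g + d * (h * -h) = g ^ 2 - d * h ^ 2 from by ring,
          map_zero, zero_mul, add_zero]
      have hγu : IsUnit (iB g + iB h * sB) := by
        apply isUnit_of_mul_isUnit_left (y := iB g + iB (-h) * sB)
        rw [hγprod]
        exact huw.map iB
      have hassoc : Associated α (iB p) := ⟨hγu.unit, by rw [IsUnit.unit_spec]; exact hγ.symm⟩
      have hspan𝔭 : 𝔭 = Ideal.span {iB p} := by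
        rw [hα]
        exact Ideal.span_singleton_eq_span_singleton.mpr hassoc
      have hle : 𝔭 ≤ 𝔭' := by
        rw [hspan𝔭, hprodEq]
        exact Ideal.mul_le_right
      exact hne (hmax𝔭.eq_of_le hP'.ne_top hle)
end

section
/- Let q be a power of an odd prime, let d ∈ 𝔽_q[T] be square-free and non-constant, and let p ∈ 𝔽_q[T] be a monic irreducible polynomial dividing d. Then in B_K the ideal generated by p satisfies p·B_K = 𝔭², where 𝔭 is the ideal of B_K generated by p and √d, and 𝔭 is a prime ideal of B_K. -/
open Polynomial

-- a squarefree nonconstant polynomial is not a square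
lemma aux_not_sq {Fq : Type} [Field Fq] {d : Polynomial Fq} (hsf : Squarefree d)
    (hnc : 0 < d.natDegree) (f : Polynomial Fq) : f ^ 2 ≠ d := by
  intro h
  have hu : IsUnit f := hsf f (by rw [← h]; exact ⟨1, by ring⟩)
  have h0 := Polynomial.natDegree_eq_zero_of_isUnit hu
  rw [← h, natDegree_pow, h0] at hnc
  simp at hnc

-- sqd is not in the image of RatFunc
lemma aux_not_range {Fq : Type} [Field Fq] {d : Polynomial Fq} (hsf : Squarefree d)
    (hnc : 0 < d.natDegree)
    {K : Type} [Field K] [Algebra (RatFunc Fq) K] [Algebra (Polynomial Fq) K]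
    [IsScalarTower (Polynomial Fq) (RatFunc Fq) K]
    {sqd : K} (hsqd : sqd ^ 2 = algebraMap (Polynomial Fq) K d) :
    sqd ∉ Set.range (algebraMap (RatFunc Fq) K) := by
  rintro ⟨f, hf⟩
  have hinjF : Function.Injective (algebraMap (RatFunc Fq) K) := (algebraMap (RatFunc Fq) K).injective
  have hf2 : f ^ 2 = algebraMap (Polynomial Fq) (RatFunc Fq) d := by
    apply hinjF
    rw [map_pow, hf, hsqd, IsScalarTower.algebraMap_apply (Polynomial Fq) (RatFunc Fq) K]
  have hfint : IsIntegral (Polynomial Fq) f := by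
    refine ⟨X ^ 2 - C d, monic_X_pow_sub_C d two_ne_zero, ?_⟩
    simp [hf2]
  obtain ⟨f', hf'⟩ := IsIntegrallyClosed.isIntegral_iff.mp hfint
  have hinjA : Function.Injective (algebraMap (Polynomial Fq) (RatFunc Fq)) :=
    IsFractionRing.injective _ _
  have : f' ^ 2 = d := by
    apply hinjA
    rw [map_pow, hf', hf2]
  exact aux_not_sq hsf hnc f' this

-- integral elements have the form a + b √d with a b polynomials
lemma aux_mem {Fq : Type} [Field Fq] (h2 : (2 : Fq) ≠ 0)
    {d : Polynomial Fq} (hsf : Squarefree d) (hnc : 0 < d.natDegree)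
    {K : Type} [Field K] [Algebra (RatFunc Fq) K] [Algebra (Polynomial Fq) K]
    [IsScalarTower (Polynomial Fq) (RatFunc Fq) K]
    {sqd : K} (hsqd : sqd ^ 2 = algebraMap (Polynomial Fq) K d)
    (hgen : ∀ z : K, ∃ a b : RatFunc Fq,
      z = algebraMap (RatFunc Fq) K a + algebraMap (RatFunc Fq) K b * sqd)
    {z : K} (hz : IsIntegral (Polynomial Fq) z) :
    ∃ a b : Polynomial Fq,
      z = algebraMap (Polynomial Fq) K a + algebraMap (Polynomial Fq) K b * sqd := by
  have hinjF : Function.Injective (algebraMap (RatFunc Fq) K) := (algebraMap (RatFunc Fq) K).injective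
  have hinjA : Function.Injective (algebraMap (Polynomial Fq) (RatFunc Fq)) :=
    IsFractionRing.injective _ _
  obtain ⟨a, b, hab⟩ := hgen z
  by_cases hb : b = 0
  · subst hb
    simp only [map_zero, zero_mul, add_zero] at hab
    have haInt : IsIntegral (Polynomial Fq) a := by
      rw [← isIntegral_algebraMap_iff hinjF]; rwa [← hab]
    obtain ⟨a', ha'⟩ := IsIntegrallyClosed.isIntegral_iff.mp haInt
    refine ⟨a', 0, ?_⟩
    rw [IsScalarTower.algebraMap_apply (Polynomial Fq) (RatFunc Fq) K, ha', ← hab]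
    simp
  · set dF := algebraMap (Polynomial Fq) (RatFunc Fq) d with hdF
    have hs' : sqd ^ 2 = algebraMap (RatFunc Fq) K dF := by
      rw [hsqd, IsScalarTower.algebraMap_apply (Polynomial Fq) (RatFunc Fq) K]
    -- z is not in the range of RatFunc → K
    have hnr : z ∉ Set.range (algebraMap (RatFunc Fq) K) := by
      rintro ⟨w, hw⟩
      apply aux_not_range hsf hnc hsqd
      refine ⟨(w - a) * b⁻¹, ?_⟩
      have hbK : algebraMap (RatFunc Fq) K b ≠ 0 := by
        simpa using fun h => hb (hinjF (by simpa using h))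
      field_simp [map_sub, map_mul, map_inv₀]
      rw [map_div₀, map_sub, hw, hab, add_sub_cancel_left, mul_div_cancel_left₀ _ hbK]
    -- the quadratic polynomial satisfied by z
    set g : Polynomial (RatFunc Fq) := X ^ 2 + C (-(2 * a)) * X + C (a ^ 2 - b ^ 2 * dF) with hg
    have hgz : aeval z g = 0 := by
      simp only [hg, map_add, map_mul, map_pow, aeval_X, aeval_C, map_neg, map_sub, map_ofNat]
      rw [hab]
      linear_combination (algebraMap (RatFunc Fq) K b) ^ 2 * hs'
    have hgmon : g.Monic := by
      unfold g; monicity!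
    have hgdeg : g.natDegree = 2 := by
      unfold g; compute_degree!
    -- identify g with the minimal polynomial
    have hzF : IsIntegral (RatFunc Fq) z := hz.tower_top
    have hdvd : minpoly (RatFunc Fq) z ∣ g := minpoly.dvd _ _ hgz
    have h2le : 2 ≤ (minpoly (RatFunc Fq) z).natDegree := by
      rw [minpoly.two_le_natDegree_iff hzF]
      simpa [RingHom.mem_range] using hnr
    obtain ⟨c, hc⟩ := hdvd
    have hmin0 : minpoly (RatFunc Fq) z ≠ 0 := minpoly.ne_zero hzF
    have hc0 : c ≠ 0 := by rintro rfl; rw [mul_zero] at hc; exact hgmon.ne_zero hc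
    have hdegs : (minpoly (RatFunc Fq) z).natDegree + c.natDegree = 2 := by
      rw [← natDegree_mul hmin0 hc0, ← hc, hgdeg]
    have hcd0 : c.natDegree = 0 := by omega
    have hcmon : c.Monic := (minpoly.monic hzF).of_mul_monic_left (hc ▸ hgmon)
    have hc1 : c = 1 := hcmon.natDegree_eq_zero.mp hcd0
    have hgeq : g = minpoly (RatFunc Fq) z := by rw [hc, hc1, mul_one]
    have hmap : g = (minpoly (Polynomial Fq) z).map (algebraMap (Polynomial Fq) (RatFunc Fq)) := by
      rw [hgeq, minpoly.isIntegrallyClosed_eq_field_fractions' (RatFunc Fq) hz]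
    set P := minpoly (Polynomial Fq) z with hP
    have hcoe1 : algebraMap (Polynomial Fq) (RatFunc Fq) (P.coeff 1) = -(2 * a) := by
      have h := congrArg (fun r => r.coeff 1) hmap
      simp only [hg, coeff_map, coeff_add, coeff_C_mul, coeff_X_pow, coeff_X, coeff_C] at h
      norm_num at h
      exact h.symm
    have hcoe0 : algebraMap (Polynomial Fq) (RatFunc Fq) (P.coeff 0) = a ^ 2 - b ^ 2 * dF := by
      have h := congrArg (fun r => r.coeff 0) hmap
      simp only [hg, coeff_map, coeff_add, coeff_C_mul, coeff_X_pow, coeff_X, coeff_C] at h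
      norm_num at h
      exact h.symm
    -- recover a
    set a' : Polynomial Fq := -(P.coeff 1) * C (2⁻¹ : Fq) with ha'
    have hC2 : (C (2 : Fq)) = (2 : Polynomial Fq) := map_ofNat C 2
    have haa : algebraMap (Polynomial Fq) (RatFunc Fq) a' = a := by
      have h1 : algebraMap (Polynomial Fq) (RatFunc Fq) (C (2⁻¹ : Fq) * (2 : Polynomial Fq)) = 1 := by
        rw [← hC2, ← C_mul, inv_mul_cancel₀ h2, map_one, map_one]
      rw [ha', map_mul, map_neg, hcoe1]
      rw [map_mul, map_ofNat] at h1
      linear_combination a * h1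
    -- recover b
    set c' : Polynomial Fq := a' ^ 2 - P.coeff 0 with hc'
    have hbd : algebraMap (Polynomial Fq) (RatFunc Fq) c' = b ^ 2 * dF := by
      rw [hc', map_sub, map_pow, haa, hcoe0]; ring
    set m : RatFunc Fq := b * dF with hm
    have hmint : IsIntegral (Polynomial Fq) m := by
      refine ⟨X ^ 2 - C (c' * d), monic_X_pow_sub_C _ two_ne_zero, ?_⟩
      have : m ^ 2 = algebraMap (Polynomial Fq) (RatFunc Fq) (c' * d) := by
        rw [map_mul, hbd, hm]; ring
      simp [this]
    obtain ⟨m', hm'⟩ := IsIntegrallyClosed.isIntegral_iff.mp hmint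
    have hm2 : m' ^ 2 = c' * d := by
      apply hinjA
      rw [map_pow, hm', map_mul, hbd, hm]; ring
    have hddvd : d ∣ m' := by
      rw [← Squarefree.dvd_pow_iff_dvd hsf (two_ne_zero (α := ℕ))]
      exact ⟨c', by rw [hm2]; ring⟩
    obtain ⟨b', hb'⟩ := hddvd
    have hd0 : d ≠ 0 := hsf.ne_zero
    have hdF0 : dF ≠ 0 := by
      simpa [hdF] using fun h => hd0 (hinjA (by simpa using h))
    have hbb : algebraMap (Polynomial Fq) (RatFunc Fq) b' = b := by
      apply mul_left_cancel₀ hdF0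
      have : dF * algebraMap (Polynomial Fq) (RatFunc Fq) b' = algebraMap (Polynomial Fq) (RatFunc Fq) m' := by
        rw [hb', map_mul]
      rw [this, hm', hm]; ring
    refine ⟨a', b', ?_⟩
    rw [IsScalarTower.algebraMap_apply (Polynomial Fq) (RatFunc Fq) K,
      IsScalarTower.algebraMap_apply (Polynomial Fq) (RatFunc Fq) K, haa, hbb, hab]

set_option maxHeartbeats 1000000 in
set_option synthInstance.maxHeartbeats 400000 in
theorem aux_main {Fq : Type} [Field Fq] (h2 : (2 : Fq) ≠ 0)
    {d : Polynomial Fq} (hsf : Squarefree d) (hnc : 0 < d.natDegree)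
    {K : Type} [Field K] [Algebra (RatFunc Fq) K] [Algebra (Polynomial Fq) K]
    [IsScalarTower (Polynomial Fq) (RatFunc Fq) K]
    {sqd : K} (hsqd : sqd ^ 2 = algebraMap (Polynomial Fq) K d)
    (hgen : ∀ z : K, ∃ a b : RatFunc Fq,
      z = algebraMap (RatFunc Fq) K a + algebraMap (RatFunc Fq) K b * sqd)
    {p : Polynomial Fq} (hirr : Irreducible p) (hpd : p ∣ d)
    (sd : ↥(integralClosure (Polynomial Fq) K)) (hsdval : (sd : K) = sqd) :
    Ideal.span {algebraMap (Polynomial Fq) ↥(integralClosure (Polynomial Fq) K) p} =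
      (Ideal.span {algebraMap (Polynomial Fq) ↥(integralClosure (Polynomial Fq) K) p, sd}) ^ 2 ∧
    (Ideal.span {algebraMap (Polynomial Fq) ↥(integralClosure (Polynomial Fq) K) p, sd}).IsPrime := by
  have hinjF : Function.Injective (algebraMap (RatFunc Fq) K) := (algebraMap (RatFunc Fq) K).injective
  have hinjA : Function.Injective (algebraMap (Polynomial Fq) (RatFunc Fq)) :=
    IsFractionRing.injective _ _
  have hinjAK : Function.Injective (algebraMap (Polynomial Fq) K) := by
    rw [IsScalarTower.algebraMap_eq (Polynomial Fq) (RatFunc Fq) K]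
    exact hinjF.comp hinjA
  set pB : ↥(integralClosure (Polynomial Fq) K) :=
    algebraMap (Polynomial Fq) ↥(integralClosure (Polynomial Fq) K) p with hpB
  set 𝓟 : Ideal ↥(integralClosure (Polynomial Fq) K) := Ideal.span {pB, sd} with hP
  have hcoeAlg : ∀ r : Polynomial Fq,
      ((algebraMap (Polynomial Fq) ↥(integralClosure (Polynomial Fq) K) r : _) : K)
      = algebraMap (Polynomial Fq) K r := fun r => SubalgebraClass.coe_algebraMap _ r
  obtain ⟨e, he⟩ := hpd
  have hpe : ¬ p ∣ e := by
    rintro ⟨t, ht⟩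
    exact hirr.not_isUnit (hsf p ⟨t, by rw [he, ht]; ring⟩)
  obtain ⟨u, v, huv⟩ := hirr.coprime_iff_not_dvd.mpr hpe
  have hp_mem : pB ∈ 𝓟 := Ideal.subset_span (Set.mem_insert _ _)
  have hsd_mem : sd ∈ 𝓟 := Ideal.subset_span (Set.mem_insert_of_mem _ rfl)
  have hsd2 : sd * sd = algebraMap (Polynomial Fq) _ d := by
    apply Subtype.ext
    show (sd : K) * (sd : K) = _
    rw [hsdval, hcoeAlg, ← hsqd]; ring
  have hsd2' : sd * sd = pB * algebraMap (Polynomial Fq) _ e := by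
    rw [hsd2, hpB, ← map_mul, ← he]
  -- the span equality
  have part1 : Ideal.span {pB} = 𝓟 ^ 2 := by
    apply le_antisymm
    · rw [Ideal.span_le, Set.singleton_subset_iff]
      have hA : p = u * (p * p) + v * d := by
        calc p = (u * p + v * e) * p := by rw [huv, one_mul]
        _ = u * (p * p) + v * d := by rw [he]; ring
      have hB : pB = algebraMap (Polynomial Fq) _ u * (pB * pB)
          + algebraMap (Polynomial Fq) _ v * (sd * sd) := by
        rw [hsd2, hpB, ← map_mul, ← map_mul, ← map_mul, ← map_add, ← hA]
      rw [SetLike.mem_coe, hB, pow_two]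
      exact add_mem (Ideal.mul_mem_left _ _ (Ideal.mul_mem_mul hp_mem hp_mem))
        (Ideal.mul_mem_left _ _ (Ideal.mul_mem_mul hsd_mem hsd_mem))
    · rw [pow_two, Ideal.mul_le]
      intro r hr s hs
      rw [hP, Ideal.mem_span_pair] at hr hs
      obtain ⟨u₁, v₁, hr⟩ := hr
      obtain ⟨u₂, v₂, hs⟩ := hs
      rw [Ideal.mem_span_singleton]
      refine ⟨u₁ * u₂ * pB + u₁ * v₂ * sd + v₁ * u₂ * sd
        + v₁ * v₂ * algebraMap (Polynomial Fq) _ e, ?_⟩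
      rw [← hr, ← hs]
      linear_combination (v₁ * v₂ : ↥(integralClosure (Polynomial Fq) K)) * hsd2'
  -- 𝓟 is proper
  have hPne : 𝓟 ≠ ⊤ := by
    intro htop
    have h1 : (1 : ↥(integralClosure (Polynomial Fq) K)) ∈ 𝓟 := by rw [htop]; trivial
    rw [hP, Ideal.mem_span_pair] at h1
    obtain ⟨x, y, hxy⟩ := h1
    obtain ⟨a₁, b₁, hx⟩ := aux_mem h2 hsf hnc hsqd hgen x.2
    obtain ⟨a₂, b₂, hy⟩ := aux_mem h2 hsf hnc hsqd hgen y.2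
    have hE : (x : K) * algebraMap (Polynomial Fq) K p + (y : K) * sqd = 1 := by
      have := congrArg (Subtype.val) hxy
      simpa [hsdval, hcoeAlg, hpB] using this
    have hwr : algebraMap (Polynomial Fq) K (b₁ * p + a₂) * sqd
        = algebraMap (Polynomial Fq) K (1 - a₁ * p - b₂ * d) := by
      simp only [map_add, map_mul, map_sub, map_one]
      rw [hx, hy] at hE
      linear_combination hE - (algebraMap (Polynomial Fq) K b₂) * hsqd
    by_cases hw0 : b₁ * p + a₂ = 0
    · have hr0 : (1 : Polynomial Fq) - a₁ * p - b₂ * d = 0 := by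
        apply hinjAK
        rw [map_zero, ← hwr, hw0, map_zero, zero_mul]
      have hdvd1 : p ∣ 1 := ⟨a₁ + b₂ * e, by linear_combination hr0 + b₂ * he⟩
      exact hirr.not_isUnit (isUnit_of_dvd_one hdvd1)
    · apply aux_not_range hsf hnc hsqd
      refine ⟨algebraMap (Polynomial Fq) (RatFunc Fq) (1 - a₁ * p - b₂ * d)
        * (algebraMap (Polynomial Fq) (RatFunc Fq) (b₁ * p + a₂))⁻¹, ?_⟩
      have hwK : algebraMap (Polynomial Fq) K (b₁ * p + a₂) ≠ 0 :=
        fun h => hw0 (hinjAK (by rw [h, map_zero]))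
      rw [map_mul, map_inv₀, ← IsScalarTower.algebraMap_apply, ← IsScalarTower.algebraMap_apply,
        ← hwr, mul_comm, inv_mul_cancel_left₀ hwK]
  -- the quotient is a field
  haveI hmax : (Ideal.span {p} : Ideal (Polynomial Fq)).IsMaximal :=
    PrincipalIdealRing.isMaximal_of_irreducible hirr
  haveI : Nontrivial (↥(integralClosure (Polynomial Fq) K) ⧸ 𝓟) :=
    Ideal.Quotient.nontrivial_iff.mpr hPne
  set f : Polynomial Fq →+* (↥(integralClosure (Polynomial Fq) K) ⧸ 𝓟) :=
    (Ideal.Quotient.mk 𝓟).comp (algebraMap (Polynomial Fq) _) with hf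
  have hfz : ∀ a ∈ (Ideal.span {p} : Ideal (Polynomial Fq)), f a = 0 := by
    intro a ha
    rw [Ideal.mem_span_singleton] at ha
    obtain ⟨t, rfl⟩ := ha
    show Ideal.Quotient.mk 𝓟 (algebraMap (Polynomial Fq) _ (p * t)) = 0
    rw [Ideal.Quotient.eq_zero_iff_mem, map_mul, ← hpB]
    exact Ideal.mul_mem_right _ _ hp_mem
  set g : (Polynomial Fq ⧸ (Ideal.span {p} : Ideal (Polynomial Fq)))
      →+* (↥(integralClosure (Polynomial Fq) K) ⧸ 𝓟) :=
    Ideal.Quotient.lift _ f hfz with hg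
  have hgsurj : Function.Surjective g := by
    intro x
    obtain ⟨zb, rfl⟩ := Ideal.Quotient.mk_surjective x
    obtain ⟨a, b, habz⟩ := aux_mem h2 hsf hnc hsqd hgen zb.2
    have hzb : zb = algebraMap (Polynomial Fq) _ a + algebraMap (Polynomial Fq) _ b * sd := by
      apply Subtype.ext
      rw [habz]
      simp [hsdval, hcoeAlg]
    refine ⟨Ideal.Quotient.mk _ a, ?_⟩
    have hmk : (Ideal.Quotient.mk 𝓟) zb
        = (Ideal.Quotient.mk 𝓟) (algebraMap (Polynomial Fq) _ a) := by
      rw [Ideal.Quotient.mk_eq_mk_iff_sub_mem]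
      have hsub : zb - algebraMap (Polynomial Fq) _ a = algebraMap (Polynomial Fq) _ b * sd := by
        rw [hzb]; ring
      rw [hsub]
      exact Ideal.mul_mem_left _ _ hsd_mem
    rw [hg, Ideal.Quotient.lift_mk, hf, RingHom.comp_apply, hmk]
  have hfield : IsField (↥(integralClosure (Polynomial Fq) K) ⧸ 𝓟) := by
    refine ⟨exists_pair_ne _, fun x y => mul_comm x y, ?_⟩
    intro a ha
    obtain ⟨x, rfl⟩ := hgsurj a
    obtain ⟨t, rfl⟩ := Ideal.Quotient.mk_surjective x
    have hpt : ¬ p ∣ t := by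
      intro h
      apply ha
      rw [hg, Ideal.Quotient.lift_mk]
      exact hfz t (Ideal.mem_span_singleton.mpr h)
    obtain ⟨u', v', huv'⟩ := hirr.coprime_iff_not_dvd.mpr hpt
    refine ⟨g (Ideal.Quotient.mk _ v'), ?_⟩
    have h1 : (Ideal.Quotient.mk (Ideal.span {p} : Ideal (Polynomial Fq)) t)
        * Ideal.Quotient.mk _ v' = 1 := by
      have h2' : (Ideal.Quotient.mk (Ideal.span {p} : Ideal (Polynomial Fq))) (t * v')
          = Ideal.Quotient.mk _ 1 := by
        rw [Ideal.Quotient.mk_eq_mk_iff_sub_mem]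
        exact Ideal.mem_span_singleton.mpr ⟨-u', by linear_combination huv'⟩
      simpa using h2'
    rw [← map_mul, h1, map_one]
  exact ⟨part1, (Ideal.Quotient.maximal_of_isField _ hfield).isPrime⟩

/-- Let `q` be a power of an odd prime, let `d ∈ 𝔽_q[T]` be square-free and
non-constant, and let `p ∈ 𝔽_q[T]` be a monic irreducible polynomial dividing
`d`.  Then in `B_K` (the integral closure of `A = 𝔽_q[T]` in `K = 𝔽_q(T)(√d)`)
one has `p·B_K = 𝔭²`, where `𝔭` is the ideal of `B_K` generated by `p` and `√d`,
and `𝔭` is a prime ideal of `B_K`. -/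
theorem stmt_4 (q : ℕ) (Fq : Type) [Field Fq] [Fintype Fq]
    (hq : Fintype.card Fq = q) (hodd : Odd q)
    (d : Polynomial Fq) (hsf : Squarefree d) (hnc : 0 < d.natDegree)
    (K : Type) [Field K] [Algebra (RatFunc Fq) K]
    [Algebra (Polynomial Fq) K] [IsScalarTower (Polynomial Fq) (RatFunc Fq) K]
    (sqd : K) (hsqd : sqd ^ 2 = algebraMap (Polynomial Fq) K d)
    (hgen : ∀ z : K, ∃ a b : RatFunc Fq,
      z = algebraMap (RatFunc Fq) K a + algebraMap (RatFunc Fq) K b * sqd)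
    (p : Polynomial Fq) (hmonic : p.Monic) (hirr : Irreducible p) (hpd : p ∣ d) :
    Ideal.span {algebraMap (Polynomial Fq) ↥(integralClosure (Polynomial Fq) K) p} =
      (Ideal.span {algebraMap (Polynomial Fq) ↥(integralClosure (Polynomial Fq) K) p,
        (⟨sqd, ⟨X ^ 2 - C d, monic_X_pow_sub_C d two_ne_zero, by simp [hsqd]⟩⟩ :
          ↥(integralClosure (Polynomial Fq) K))}) ^ 2 ∧
    (Ideal.span {algebraMap (Polynomial Fq) ↥(integralClosure (Polynomial Fq) K) p,
        (⟨sqd, ⟨X ^ 2 - C d, monic_X_pow_sub_C d two_ne_zero, by simp [hsqd]⟩⟩ :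
          ↥(integralClosure (Polynomial Fq) K))}).IsPrime := by
  have hchar : ringChar Fq ≠ 2 := by
    intro h
    have hcard := FiniteField.even_card_of_char_two h
    rw [hq] at hcard
    rcases hodd with ⟨k, hk⟩
    omega
  have h2 : (2 : Fq) ≠ 0 := Ring.two_ne_zero hchar
  exact aux_main h2 hsf hnc hsqd hgen hirr hpd _ rfl
end

section
/- Let q be a power of an odd prime and let d ∈ 𝔽_q[T] be square-free and non-constant. Then the integral closure of A = 𝔽_q[T] in K = 𝔽_q(T)(√d) equals the subring A[√d] = {x + y·√d : x, y ∈ A}. -/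
open Polynomial

/-- A squarefree non-constant polynomial is not a square in the polynomial ring. -/
lemma aux_no_sqrt_poly {Fq : Type} [Field Fq] {d : Polynomial Fq}
    (hsf : Squarefree d) (hnc : 0 < d.natDegree) :
    ∀ e : Polynomial Fq, e ^ 2 ≠ d := by
  intro e he
  have hdvd : e * e ∣ d := ⟨1, by rw [← he]; ring⟩
  have hu : IsUnit e := hsf e hdvd
  have h0 : e.natDegree = 0 := natDegree_eq_zero_of_isUnit hu
  have : d.natDegree = 0 := by
    rw [← he, natDegree_pow, h0, mul_zero]
  omega

/-- A squarefree non-constant polynomial is not a square in the rational function field. -/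
lemma aux_no_sqrt_ratfunc {Fq : Type} [Field Fq] {d : Polynomial Fq}
    (hsf : Squarefree d) (hnc : 0 < d.natDegree) :
    ∀ b : RatFunc Fq, b ^ 2 ≠ algebraMap (Polynomial Fq) (RatFunc Fq) d := by
  intro b hb
  have hint : IsIntegral (Polynomial Fq) b := by
    refine ⟨X ^ 2 - C d, monic_X_pow_sub_C d (by norm_num), ?_⟩
    simp [eval₂_sub, eval₂_pow, hb]
  obtain ⟨e, he⟩ := IsIntegrallyClosed.isIntegral_iff.mp hint
  have : algebraMap (Polynomial Fq) (RatFunc Fq) (e ^ 2) =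
      algebraMap (Polynomial Fq) (RatFunc Fq) d := by
    rw [map_pow, he, hb]
  exact aux_no_sqrt_poly hsf hnc e (IsFractionRing.injective (Polynomial Fq) (RatFunc Fq) this)

/-- Let `q` be a power of an odd prime and let `d ∈ 𝔽_q[T]` be square-free and
non-constant.  Then the integral closure of `A = 𝔽_q[T]` in `K = 𝔽_q(T)(√d)`
equals the subring `A[√d] = {x + y·√d : x, y ∈ A}`. -/
theorem stmt_5 (q : ℕ) (Fq : Type) [Field Fq] [Fintype Fq]
    (hq : Fintype.card Fq = q) (hodd : Odd q)
    (d : Polynomial Fq) (hsf : Squarefree d) (hnc : 0 < d.natDegree)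
    (K : Type) [Field K] [Algebra (RatFunc Fq) K]
    [Algebra (Polynomial Fq) K] [IsScalarTower (Polynomial Fq) (RatFunc Fq) K]
    (sqd : K) (hsqd : sqd ^ 2 = algebraMap (Polynomial Fq) K d)
    (hgen : ∀ z : K, ∃ a b : RatFunc Fq,
      z = algebraMap (RatFunc Fq) K a + algebraMap (RatFunc Fq) K b * sqd) :
    ∀ z : K, z ∈ integralClosure (Polynomial Fq) K ↔
      ∃ x y : Polynomial Fq,
        z = algebraMap (Polynomial Fq) K x + algebraMap (Polynomial Fq) K y * sqd := by
  intro z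
  have hginj : Function.Injective (algebraMap (RatFunc Fq) K) :=
    (algebraMap (RatFunc Fq) K).injective
  have hfinj : Function.Injective (algebraMap (Polynomial Fq) (RatFunc Fq)) :=
    IsFractionRing.injective (Polynomial Fq) (RatFunc Fq)
  have hs2 : sqd ^ 2 = algebraMap (RatFunc Fq) K (algebraMap (Polynomial Fq) (RatFunc Fq) d) := by
    rw [hsqd, IsScalarTower.algebraMap_apply (Polynomial Fq) (RatFunc Fq) K]
  -- 2 ≠ 0 in Fq
  have h2 : (2 : Fq) ≠ 0 := by
    intro h20
    have hchar : ringChar Fq ∣ 2 :=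
      (CharP.cast_eq_zero_iff Fq (ringChar Fq) 2).mp (by exact_mod_cast h20)
    have hprime : (ringChar Fq).Prime := CharP.char_is_prime Fq (ringChar Fq)
    have hchar2 : ringChar Fq = 2 := ((Nat.prime_dvd_prime_iff_eq hprime Nat.prime_two).mp hchar)
    have hcard : (q : Fq) = 0 := by
      rw [← hq]; exact FiniteField.cast_card_eq_zero Fq
    have : ringChar Fq ∣ q := (CharP.cast_eq_zero_iff Fq (ringChar Fq) q).mp hcard
    rw [hchar2] at this
    rw [Nat.odd_iff] at hodd
    omega
  -- independence of 1, sqd over RatFunc Fq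
  have hind : ∀ u v : RatFunc Fq,
      algebraMap (RatFunc Fq) K u + algebraMap (RatFunc Fq) K v * sqd = 0 → u = 0 ∧ v = 0 := by
    intro u v huv
    by_cases hv : v = 0
    · refine ⟨?_, hv⟩
      rw [hv, map_zero, zero_mul, add_zero] at huv
      exact hginj (by rw [huv, map_zero])
    · exfalso
      have hvK : algebraMap (RatFunc Fq) K v ≠ 0 := fun h => hv (hginj (by rw [h, map_zero]))
      have hsq : sqd = algebraMap (RatFunc Fq) K (-u / v) := by
        rw [map_div₀, map_neg, eq_div_iff hvK]
        linear_combination huv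
      apply aux_no_sqrt_ratfunc hsf hnc (-u / v)
      apply hginj
      rw [map_pow, ← hsq, hs2]
  constructor
  · -- hard direction
    rintro hz
    obtain ⟨a, b, hz2⟩ := hgen z
    have hzi : IsIntegral (Polynomial Fq) z := hz
    have hzF : IsIntegral (RatFunc Fq) z := hzi.tower_top
    by_cases hb : b = 0
    · -- z lies in RatFunc Fq
      have hza : z = algebraMap (RatFunc Fq) K a := by
        rw [hz2, hb, map_zero, zero_mul, add_zero]
      have hai : IsIntegral (Polynomial Fq) a := by
        rw [hza] at hzi
        exact (isIntegral_algebraMap_iff hginj).mp hzi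
      obtain ⟨x, hx⟩ := IsIntegrallyClosed.isIntegral_iff.mp hai
      exact ⟨x, 0, by
        rw [hza, ← hx, map_zero, zero_mul, add_zero,
          IsScalarTower.algebraMap_apply (Polynomial Fq) (RatFunc Fq) K]⟩
    · -- the interesting case
      have hzK : ∀ c : RatFunc Fq, z ≠ algebraMap (RatFunc Fq) K c := by
        intro c hc
        have : algebraMap (RatFunc Fq) K (a - c) + algebraMap (RatFunc Fq) K b * sqd = 0 := by
          rw [map_sub]
          rw [hz2] at hc
          linear_combination hc
        exact hb (hind _ _ this).2
      set p : Polynomial (RatFunc Fq) :=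
        X ^ 2 - C (2 * a) * X + C (a ^ 2 - b ^ 2 * algebraMap (Polynomial Fq) (RatFunc Fq) d)
        with hp
      have hroot : (Polynomial.aeval z) p = 0 := by
        rw [hp, hz2]
        simp only [map_add, map_sub, map_mul, map_pow, aeval_X, aeval_C]
        simp only [map_mul, map_sub, map_pow, map_add, map_ofNat]
        linear_combination (algebraMap (RatFunc Fq) K b) ^ 2 * hs2
      have hpmonic : p.Monic := by
        unfold p
        monicity!
      have hpdeg : p.natDegree = 2 := by
        unfold p
        compute_degree!
      -- minimal polynomial of z over RatFunc Fq equals p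
      have hmindvd : minpoly (RatFunc Fq) z ∣ p := minpoly.dvd (RatFunc Fq) z hroot
      have hpne : p ≠ 0 := hpmonic.ne_zero
      have hminmonic : (minpoly (RatFunc Fq) z).Monic := minpoly.monic hzF
      have hmindeg : (minpoly (RatFunc Fq) z).natDegree = 2 := by
        have hle : (minpoly (RatFunc Fq) z).natDegree ≤ 2 := by
          have := Polynomial.natDegree_le_of_dvd hmindvd hpne
          omega
        have hpos : 0 < (minpoly (RatFunc Fq) z).natDegree := minpoly.natDegree_pos hzF
        rcases (by omega :
          (minpoly (RatFunc Fq) z).natDegree = 1 ∨ (minpoly (RatFunc Fq) z).natDegree = 2)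
          with h1 | h2
        · exfalso
          have : (minpoly (RatFunc Fq) z).degree = 1 := by
            rw [degree_eq_natDegree (minpoly.ne_zero hzF), h1]; rfl
          obtain ⟨c, hc⟩ := minpoly.degree_eq_one_iff.mp this
          exact hzK c hc.symm
        · exact h2
      have hpeq : p = minpoly (RatFunc Fq) z := by
        obtain ⟨r, hr⟩ := hmindvd
        have hrne : r ≠ 0 := by
          intro h; rw [h, mul_zero] at hr; exact hpne hr
        have hrdeg : r.natDegree = 0 := by
          have := Polynomial.natDegree_mul (minpoly.ne_zero hzF) hrne
          rw [← hr] at this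
          omega
        have hrC : r = C (r.coeff 0) := Polynomial.eq_C_of_natDegree_eq_zero hrdeg
        have hlead : r.coeff 0 = 1 := by
          have := hpmonic.leadingCoeff
          rw [hr, Polynomial.leadingCoeff_mul, hminmonic.leadingCoeff, one_mul] at this
          rw [Polynomial.leadingCoeff, hrdeg] at this
          exact this
        rw [hr, hrC, hlead, map_one, mul_one]
      -- coefficients of p come from A
      have hminA : minpoly (RatFunc Fq) z =
          (minpoly (Polynomial Fq) z).map (algebraMap (Polynomial Fq) (RatFunc Fq)) :=
        minpoly.isIntegrallyClosed_eq_field_fractions' (RatFunc Fq) hzi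
      have hc1 : p.coeff 1 =
          algebraMap (Polynomial Fq) (RatFunc Fq) ((minpoly (Polynomial Fq) z).coeff 1) := by
        rw [hpeq, hminA, coeff_map]
      have hc0 : p.coeff 0 =
          algebraMap (Polynomial Fq) (RatFunc Fq) ((minpoly (Polynomial Fq) z).coeff 0) := by
        rw [hpeq, hminA, coeff_map]
      have hpc1 : p.coeff 1 = -(2 * a) := by
        rw [hp]
        simp only [coeff_add, coeff_sub, coeff_C_mul, coeff_X_pow, coeff_X, coeff_C]
        simp
      have hpc0 : p.coeff 0 = a ^ 2 - b ^ 2 * algebraMap (Polynomial Fq) (RatFunc Fq) d := by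
        rw [hp, coeff_add, coeff_sub, Polynomial.coeff_C_zero]
        simp
      set m1 := (minpoly (Polynomial Fq) z).coeff 1 with hm1
      set m0 := (minpoly (Polynomial Fq) z).coeff 0 with hm0
      -- recover x with algebraMap x = a
      have h2A : algebraMap (Polynomial Fq) (RatFunc Fq) (C (2⁻¹ : Fq)) * 2 = 1 := by
        have h2' : (2 : RatFunc Fq) = algebraMap (Polynomial Fq) (RatFunc Fq) (C (2 : Fq)) := by
          rw [map_ofNat (C : Fq →+* Polynomial Fq) 2]
          rw [map_ofNat (algebraMap (Polynomial Fq) (RatFunc Fq)) 2]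
        rw [h2', ← map_mul, ← C_mul, inv_mul_cancel₀ h2, map_one, map_one]
      set x : Polynomial Fq := -(C (2⁻¹ : Fq) * m1) with hxdef
      have hx : algebraMap (Polynomial Fq) (RatFunc Fq) x = a := by
        have h1 : -(2 * a) = algebraMap (Polynomial Fq) (RatFunc Fq) m1 := by rw [← hpc1, hc1]
        rw [hxdef, map_neg, map_mul, ← h1]
        linear_combination a * h2A
      -- b^2 * d is in A
      have hbd : b ^ 2 * algebraMap (Polynomial Fq) (RatFunc Fq) d =
          algebraMap (Polynomial Fq) (RatFunc Fq) (x ^ 2 - m0) := by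
        have h0 : a ^ 2 - b ^ 2 * algebraMap (Polynomial Fq) (RatFunc Fq) d =
            algebraMap (Polynomial Fq) (RatFunc Fq) m0 := by
          rw [← hpc0, hc0]
        rw [map_sub, map_pow, hx]
        linear_combination -h0
      -- denominator of b is a unit
      set n := b.num with hn
      set m := b.denom with hm
      have hmne : m ≠ 0 := RatFunc.denom_ne_zero b
      have hmFne : algebraMap (Polynomial Fq) (RatFunc Fq) m ≠ 0 := by
        intro h; exact hmne (hfinj (by rw [h, map_zero]))
      have hnd : b * algebraMap (Polynomial Fq) (RatFunc Fq) m =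
          algebraMap (Polynomial Fq) (RatFunc Fq) n := by
        conv_lhs => rw [← RatFunc.num_div_denom b]
        exact div_mul_cancel₀ _ hmFne
      have key : n ^ 2 * d = (x ^ 2 - m0) * m ^ 2 := by
        apply hfinj
        rw [map_mul, map_mul, map_pow, map_pow, ← hnd, ← hbd]
        ring
      have hdvd2 : m ^ 2 ∣ d := by
        have hcop : IsCoprime (m ^ 2) (n ^ 2) :=
          ((RatFunc.isCoprime_num_denom b).symm.pow : IsCoprime (m ^ 2) (n ^ 2))
        have hdd : m ^ 2 ∣ n ^ 2 * d := ⟨x ^ 2 - m0, by rw [key]; ring⟩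
        exact hcop.dvd_of_dvd_mul_left hdd
      have hmu : IsUnit m := by
        apply hsf m
        obtain ⟨c, hc⟩ := hdvd2
        exact ⟨c, by rw [hc]; ring⟩
      obtain ⟨u, hu⟩ := hmu
      set y : Polynomial Fq := n * ↑u⁻¹ with hydef
      have hy : algebraMap (Polynomial Fq) (RatFunc Fq) y = b := by
        rw [hydef, map_mul, ← hnd, ← hu, mul_assoc, ← map_mul]
        rw [show ((u : Polynomial Fq) * ↑u⁻¹ : Polynomial Fq) = 1 from by
          exact_mod_cast u.mul_inv]
        rw [map_one, mul_one]
      exact ⟨x, y, by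
        rw [hz2, IsScalarTower.algebraMap_apply (Polynomial Fq) (RatFunc Fq) K,
          IsScalarTower.algebraMap_apply (Polynomial Fq) (RatFunc Fq) K, hx, hy]⟩
  · -- reverse direction
    rintro ⟨x, y, rfl⟩
    have hsi : IsIntegral (Polynomial Fq) sqd := by
      refine ⟨X ^ 2 - C d, monic_X_pow_sub_C d (by norm_num), ?_⟩
      simp [eval₂_sub, eval₂_pow, hsqd]
    exact (isIntegral_algebraMap.add (isIntegral_algebraMap.mul hsi) :
      IsIntegral (Polynomial Fq) _)
end

section
/- Let q be a power of an odd prime and let d ∈ 𝔽_q[T] be square-free and non-constant. If g, h ∈ A = 𝔽_q[T] are such that g + h·√d is a unit of the ring A[√d] and h ≠ 0, then 2·deg g = deg d + 2·deg h; in particular 2·deg g ≥ deg d. -/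
open Polynomial

/-- Let `q` be a power of an odd prime and let `d ∈ 𝔽_q[T]` be square-free and
non-constant.  If `g, h ∈ A = 𝔽_q[T]` are such that `g + h·√d` is a unit of the
ring `A[√d]` (i.e. it has an inverse of the form `g' + h'·√d` with `g', h' ∈ A`)
and `h ≠ 0`, then `2·deg g = deg d + 2·deg h`; in particular `2·deg g ≥ deg d`. -/
theorem stmt_7 (q : ℕ) (Fq : Type) [Field Fq] [Fintype Fq]
    (hq : Fintype.card Fq = q) (hodd : Odd q)
    (d : Polynomial Fq) (hsf : Squarefree d) (hnc : 0 < d.natDegree)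
    (K : Type) [Field K] [Algebra (RatFunc Fq) K]
    [Algebra (Polynomial Fq) K] [IsScalarTower (Polynomial Fq) (RatFunc Fq) K]
    (sqd : K) (hsqd : sqd ^ 2 = algebraMap (Polynomial Fq) K d)
    (hgen : ∀ z : K, ∃ a b : RatFunc Fq,
      z = algebraMap (RatFunc Fq) K a + algebraMap (RatFunc Fq) K b * sqd)
    (g h : Polynomial Fq) (hh : h ≠ 0)
    (hu : ∃ g' h' : Polynomial Fq,
      (algebraMap (Polynomial Fq) K g + algebraMap (Polynomial Fq) K h * sqd) *
        (algebraMap (Polynomial Fq) K g' + algebraMap (Polynomial Fq) K h' * sqd) = 1) :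
    2 * g.natDegree = d.natDegree + 2 * h.natDegree ∧ d.natDegree ≤ 2 * g.natDegree := by
  obtain ⟨g', h', hmul⟩ := hu
  have hd0 : d ≠ 0 := hsf.ne_zero
  set ι := algebraMap (Polynomial Fq) (RatFunc Fq) with hι
  set ψ := algebraMap (RatFunc Fq) K with hψ
  set φ := algebraMap (Polynomial Fq) K with hφ
  have hψinj : Function.Injective ψ := ψ.injective
  have hιinj : Function.Injective ι := IsFractionRing.injective _ _
  have hcomp : ∀ x : Polynomial Fq, φ x = ψ (ι x) := fun x =>
    IsScalarTower.algebraMap_apply _ _ _ x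
  -- d has no square root in RatFunc Fq
  have hnosq : ∀ r : RatFunc Fq, r ^ 2 ≠ ι d := by
    intro r hr
    have hint : IsIntegral (Polynomial Fq) r := by
      refine ⟨X ^ 2 - C d, monic_X_pow_sub_C d (by norm_num), ?_⟩
      simp [eval₂_sub, hr, hι]
    obtain ⟨p, rfl⟩ := IsIntegrallyClosed.isIntegral_iff.mp hint
    rw [← map_pow] at hr
    have hp : p ^ 2 = d := hιinj hr
    have hpu : IsUnit p := hsf p ⟨1, by rw [← hp]; ring⟩
    have : p.natDegree = 0 := natDegree_eq_zero_of_isUnit hpu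
    have : d.natDegree = 0 := by
      rw [← hp, natDegree_pow, this]
    omega
  -- linear independence of 1, sqd over polynomials
  have hli : ∀ a b : Polynomial Fq, φ a + φ b * sqd = 0 → a = 0 ∧ b = 0 := by
    intro a b hab
    by_cases hb : b = 0
    · subst hb
      simp only [map_zero, zero_mul, add_zero] at hab
      have : a = 0 := hιinj (hψinj (by rw [← hcomp, hab, map_zero, map_zero]))
      exact ⟨this, rfl⟩
    · exfalso
      have hψb : ψ (ι b) ≠ 0 := fun hz => hb (hιinj (hψinj (by rw [hz, map_zero, map_zero])))
      have hsqd_eq : sqd = ψ (-(ι a) / ι b) := by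
        rw [map_div₀, map_neg]
        field_simp
        have := hab
        rw [hcomp a, hcomp b] at this
        linear_combination this
      apply hnosq (-(ι a) / ι b)
      apply hψinj
      rw [map_pow, ← hsqd_eq, hsqd, hcomp]
  -- extract polynomial equations from hmul
  have hexp : φ (g * g' + d * (h * h') - 1) + φ (g * h' + g' * h) * sqd = 0 := by
    simp only [map_sub, map_add, map_mul, map_one]
    linear_combination hmul - (φ h * φ h') * hsqd
  obtain ⟨e1, e2⟩ := hli _ _ hexp
  have eq1 : g * g' + d * (h * h') - 1 = 0 := e1
  have eq2 : g * h' + g' * h = 0 := e2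
  have key : (g ^ 2 - d * h ^ 2) * (g' ^ 2 - d * h' ^ 2) = 1 := by
    linear_combination (g * g' + d * (h * h') + 1) * eq1 - d * (g * h' + g' * h) * eq2
  set u : Polynomial Fq := g ^ 2 - d * h ^ 2 with hudef
  have hu0 : u ≠ 0 := fun hz => by simp [hz] at key
  have hundeg : u.natDegree = 0 :=
    natDegree_eq_zero_of_isUnit (IsUnit.of_mul_eq_one _ key)
  have hdh : (d * h ^ 2).natDegree = d.natDegree + 2 * h.natDegree := by
    rw [natDegree_mul hd0 (pow_ne_zero 2 hh), natDegree_pow]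
  have hg0 : g ≠ 0 := by
    intro hz
    have : u = -(d * h ^ 2) := by rw [hudef, hz]; ring
    have h1 : u.natDegree = d.natDegree + 2 * h.natDegree := by
      rw [this, natDegree_neg, hdh]
    omega
  have hgdeg : 0 < g.natDegree := by
    by_contra hzero
    push_neg at hzero
    have hg' : g.natDegree = 0 := by omega
    have hdhu : d * h ^ 2 = g ^ 2 - u := by rw [hudef]; ring
    have : (d * h ^ 2).natDegree ≤ 0 := by
      rw [hdhu]
      calc (g ^ 2 - u).natDegree ≤ max (g ^ 2).natDegree u.natDegree := natDegree_sub_le _ _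
        _ ≤ 0 := by rw [natDegree_pow, hg', hundeg]; simp
    omega
  have hdhu : d * h ^ 2 = g ^ 2 - u := by rw [hudef]; ring
  have hmain : (d * h ^ 2).natDegree = 2 * g.natDegree := by
    rw [hdhu, natDegree_sub_eq_left_of_natDegree_lt, natDegree_pow]
    rw [natDegree_pow, hundeg]
    omega
  constructor
  · omega
  · omega
end
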